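/- Let d ≥ 1, let η_0, η₁, …, η_d ∈ G(n,k), let m₁, …, m_d > 0 with η_0 = Σ_{i=1}^d m_i • η_i, and let ε > 0. Then there exist η̃_0, η̃₁, …, η̃_d ∈ G(n,k), each of the form ‖M(B)‖⁻¹ • M(B) for some matrix B ∈ Matrix (Fin n) (Fin k) ℝ with rational entries and M(B) ≠ 0, such that ‖η̃_i − η_i‖ < ε/(2·d·m_i) for each i ∈ {1, …, d}, ‖η̃_0 − η_0‖ < ε/2, and the defect ζ := η̃_0 − Σ_{i=1}^d m_i • η̃_i satisfies ‖ζ‖ < ε. -/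

import Mathlib

open scoped BigOperators Matrix

/-- `Lam n k` : the `k`-element subsets of `Fin n` (the index set `Λ(n,k)`). -/
abbrev Lam (n k : ℕ) : Type := {s : Finset (Fin n) // s.card = k}

/-- The Plücker (minor) vector of a matrix `A : Matrix (Fin n) (Fin k) ℝ`:
`M(A)(λ)` is the determinant of the `k × k` submatrix of `A` formed by the rows
indexed by `λ`. -/
noncomputable def pluecker (n k : ℕ) (A : Matrix (Fin n) (Fin k) ℝ) :
    EuclideanSpace ℝ (Lam n k) :=
  WithLp.toLp 2 (fun lam : Lam n k => (A.submatrix (lam.1.orderEmbOfFin lam.2) id).det)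

/-- The Plücker model of the oriented Grassmannian `G(n,k)`. -/
def Grass (n k : ℕ) : Set (EuclideanSpace ℝ (Lam n k)) :=
  {x | ∃ A : Matrix (Fin n) (Fin k) ℝ, Aᵀ * A = 1 ∧ pluecker n k A = x}

/-- A unit simple k-vector with rational slope: the normalized Pluecker vector of a
matrix with rational entries and nonzero Pluecker vector. -/
def HasRationalSlope (n k : ℕ) (x : EuclideanSpace ℝ (Lam n k)) : Prop :=
  ∃ B : Matrix (Fin n) (Fin k) ℝ,
    (∀ i j, ∃ q : ℚ, B i j = (q : ℝ)) ∧
    pluecker n k B ≠ 0 ∧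
    x = ‖pluecker n k B‖⁻¹ • pluecker n k B

open Finset Equiv in
theorem cb_rest {n k : ℕ} (A : Matrix (Fin n) (Fin k) ℝ) :
    ∑ p : Fin k → Fin n, (A.submatrix p id).det * ∏ j, A (p j) j
      = ∑ lam : Lam n k, ((A.submatrix (lam.1.orderEmbOfFin lam.2) id).det) ^ 2 := by
  classical
  set F : (Fin k → Fin n) → ℝ := fun p => (A.submatrix p id).det * ∏ j, A (p j) j with hF
  have step2 : ∀ p : Fin k → Fin n, ¬ Function.Injective p → (A.submatrix p id).det = 0 := by
    intro p hp
    rw [Function.not_injective_iff] at hp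
    obtain ⟨i, j, hpij, hij⟩ := hp
    exact Matrix.det_zero_of_row_eq hij (funext fun c => by simp [Matrix.submatrix_apply, hpij])
  rw [← Finset.sum_filter_of_ne (p := fun p : Fin k → Fin n => Function.Injective p)
    (by intro p _ h; by_contra hinj; exact h (by rw [step2 p hinj, zero_mul]))]
  have himg : ∀ (lam : Lam n k) (τ : Perm (Fin k)),
      Finset.image ((lam.1.orderEmbOfFin lam.2) ∘ τ) Finset.univ = lam.1 := by
    intro lam τ
    apply Finset.eq_of_subset_of_card_le
    · intro x hx
      simp only [Finset.mem_image, Function.comp_apply] at hx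
      obtain ⟨i, _, rfl⟩ := hx
      exact Finset.orderEmbOfFin_mem _ _ _
    · rw [Finset.card_image_of_injective _
        ((lam.1.orderEmbOfFin lam.2).injective.comp τ.injective),
        Finset.card_univ, Fintype.card_fin, lam.2]
  have hbij : ∑ x : Lam n k × Perm (Fin k), F ((x.1.1.orderEmbOfFin x.1.2) ∘ x.2)
      = ∑ p ∈ Finset.univ.filter (fun p : Fin k → Fin n => Function.Injective p), F p := by
    refine Finset.sum_bij (fun x _ => (x.1.1.orderEmbOfFin x.1.2) ∘ x.2) ?_ ?_ ?_ ?_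
    · intro x _
      simp only [Finset.mem_filter, Finset.mem_univ, true_and]
      exact (x.1.1.orderEmbOfFin x.1.2).injective.comp x.2.injective
    · intro x _ y _ h
      have h2 : ⇑((x.1.1).orderEmbOfFin x.1.2) ∘ ⇑x.2 = ⇑((y.1.1).orderEmbOfFin y.1.2) ∘ ⇑y.2 := h
      have h1 : x.1 = y.1 := by
        apply Subtype.ext
        rw [← himg x.1 x.2, ← himg y.1 y.2, h2]
      have h3 : x.2 = y.2 := by
        ext j
        have h4 := congrFun h2 j
        simp only [Function.comp_apply, h1] at h4
        exact congrArg Fin.val ((y.1.1.orderEmbOfFin y.1.2).injective h4)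
      exact Prod.ext h1 h3
    · intro p hp
      have hpinj : Function.Injective p := (Finset.mem_filter.mp hp).2
      have hcard : (Finset.image p Finset.univ).card = k := by
        rw [Finset.card_image_of_injective _ hpinj, Finset.card_univ, Fintype.card_fin]
      set lamset := Finset.image p Finset.univ
      set iso := lamset.orderIsoOfFin hcard
      have hmem : ∀ j, p j ∈ lamset := fun j => Finset.mem_image_of_mem p (Finset.mem_univ j)
      set t : Fin k → Fin k := fun j => iso.symm ⟨p j, hmem j⟩ with ht
      have htinj : Function.Injective t := by
        intro i j hij
        have := congrArg iso hij
        simp only [ht, OrderIso.apply_symm_apply, Subtype.mk.injEq] at this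
        exact hpinj this
      refine ⟨⟨⟨lamset, hcard⟩, Equiv.ofBijective t (Finite.injective_iff_bijective.mp htinj)⟩,
        Finset.mem_univ _, ?_⟩
      funext j
      show lamset.orderEmbOfFin hcard (t j) = p j
      rw [← Finset.coe_orderIsoOfFin_apply]
      simp [ht, iso]
    · intro x _; rfl
  rw [← hbij, Fintype.sum_prod_type]
  refine Finset.sum_congr rfl fun lam _ => ?_
  set M := A.submatrix (lam.1.orderEmbOfFin lam.2) id with hM
  have hsub : ∀ τ : Perm (Fin k),
      A.submatrix ((lam.1.orderEmbOfFin lam.2) ∘ τ) id = M.submatrix τ id := fun τ => rfl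
  calc ∑ τ : Perm (Fin k), F ((lam.1.orderEmbOfFin lam.2) ∘ τ)
      = ∑ τ : Perm (Fin k), M.det * (((Perm.sign τ : ℤ) : ℝ) * ∏ j, M (τ j) j) := by
        refine Finset.sum_congr rfl fun τ _ => ?_
        rw [hF]
        simp only
        rw [hsub, Matrix.det_permute]
        push_cast
        ring_nf
        rfl
    _ = M.det * ∑ τ : Perm (Fin k), ((Perm.sign τ : ℤ) : ℝ) * ∏ j, M (τ j) j := by
        rw [Finset.mul_sum]
    _ = M.det ^ 2 := by rw [← Matrix.det_apply', sq]

open Finset Equiv in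
theorem cauchy_binet {n k : ℕ} (A : Matrix (Fin n) (Fin k) ℝ) :
    (Aᵀ * A).det = ∑ lam : Lam n k,
      ((A.submatrix (lam.1.orderEmbOfFin lam.2) id).det) ^ 2 := by
  classical
  have hdetsub : ∀ p : Fin k → Fin n,
      (A.submatrix p id).det = ∑ σ : Perm (Fin k),
        ((Perm.sign σ : ℤ) : ℝ) * ∏ i, A (p i) (σ i) := by
    intro p
    rw [← Matrix.det_transpose, Matrix.det_apply']
    rfl
  have step1 : (Aᵀ * A).det
      = ∑ p : Fin k → Fin n, (A.submatrix p id).det * ∏ j, A (p j) j := by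
    rw [Matrix.det_apply']
    simp only [Matrix.mul_apply, Matrix.transpose_apply]
    calc ∑ σ : Perm (Fin k), ((Perm.sign σ : ℤ) : ℝ) * ∏ i, ∑ r, A r (σ i) * A r i
        = ∑ σ : Perm (Fin k), ∑ p : Fin k → Fin n,
            ((Perm.sign σ : ℤ) : ℝ) * ∏ i, (A (p i) (σ i) * A (p i) i) := by
          refine Finset.sum_congr rfl fun σ _ => ?_
          rw [Finset.prod_univ_sum, Finset.mul_sum, Fintype.piFinset_univ]
      _ = ∑ p : Fin k → Fin n, ∑ σ : Perm (Fin k),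
            ((Perm.sign σ : ℤ) : ℝ) * ∏ i, (A (p i) (σ i) * A (p i) i) :=
          Finset.sum_comm
      _ = ∑ p : Fin k → Fin n, (A.submatrix p id).det * ∏ j, A (p j) j := by
          refine Finset.sum_congr rfl fun p _ => ?_
          rw [hdetsub, Finset.sum_mul]
          refine Finset.sum_congr rfl fun σ _ => ?_
          rw [Finset.prod_mul_distrib, mul_assoc]
  rw [step1]
  exact cb_rest A

theorem norm_pluecker_sq {n k : ℕ} (A : Matrix (Fin n) (Fin k) ℝ) :
    ‖pluecker n k A‖ ^ 2 = (Aᵀ * A).det := by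
  rw [EuclideanSpace.norm_eq, Real.sq_sqrt (by positivity), cauchy_binet]
  refine Finset.sum_congr rfl fun lam _ => ?_
  rw [Real.norm_eq_abs, sq_abs]
  rfl

theorem norm_pluecker_of_orth {n k : ℕ} {A : Matrix (Fin n) (Fin k) ℝ}
    (hA : Aᵀ * A = 1) : ‖pluecker n k A‖ = 1 := by
  have h := norm_pluecker_sq A
  rw [hA, Matrix.det_one] at h
  nlinarith [norm_nonneg (pluecker n k A)]

theorem pluecker_mul {n k : ℕ} (B : Matrix (Fin n) (Fin k) ℝ)
    (C : Matrix (Fin k) (Fin k) ℝ) :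
    pluecker n k (B * C) = C.det • pluecker n k B := by
  ext lam
  show ((B * C).submatrix (lam.1.orderEmbOfFin lam.2) id).det
      = C.det * (B.submatrix (lam.1.orderEmbOfFin lam.2) id).det
  rw [Matrix.submatrix_mul B C _ id id Function.bijective_id, Matrix.det_mul]
  simp [mul_comm]

theorem conjT_eq_transpose {n k : ℕ} (B : Matrix (Fin n) (Fin k) ℝ) : Bᴴ = Bᵀ := by
  ext i j; simp [Matrix.conjTranspose_apply]

theorem posdef_of_det_ne_zero {n k : ℕ} (B : Matrix (Fin n) (Fin k) ℝ)
    (h : (Bᵀ * B).det ≠ 0) : (Bᵀ * B).PosDef := by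
  have hsemi : (Bᵀ * B).PosSemidef := by
    have := Matrix.posSemidef_conjTranspose_mul_self B
    rwa [conjT_eq_transpose] at this
  refine Matrix.PosDef.of_dotProduct_mulVec_pos hsemi.1 fun x hx => ?_
  rcases lt_or_eq_of_le (hsemi.dotProduct_mulVec_nonneg x) with hlt | heq
  · exact hlt
  · exfalso
    have hdot : star x ⬝ᵥ (Bᵀ * B) *ᵥ x = (B *ᵥ x) ⬝ᵥ (B *ᵥ x) := by
      rw [star_trivial, ← Matrix.mulVec_mulVec, Matrix.dotProduct_mulVec,
        Matrix.vecMul_transpose]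
    have hBx : B *ᵥ x = 0 := by
      rw [← dotProduct_self_eq_zero (v := B *ᵥ x), ← hdot, ← heq]
    have hMx : (Bᵀ * B) *ᵥ x = 0 := by
      rw [← Matrix.mulVec_mulVec, hBx, Matrix.mulVec_zero]
    have hxz : x = 0 := by
      have hinv := Matrix.nonsing_inv_mul (Bᵀ * B) (Ne.isUnit h)
      calc x = ((Bᵀ * B)⁻¹ * (Bᵀ * B)) *ᵥ x := by rw [hinv, Matrix.one_mulVec]
        _ = (Bᵀ * B)⁻¹ *ᵥ ((Bᵀ * B) *ᵥ x) := by rw [Matrix.mulVec_mulVec]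
        _ = 0 := by rw [hMx, Matrix.mulVec_zero]
    exact hx hxz

open scoped MatrixOrder in
theorem normalized_mem_grass {n k : ℕ} {B : Matrix (Fin n) (Fin k) ℝ}
    (hB : pluecker n k B ≠ 0) :
    ‖pluecker n k B‖⁻¹ • pluecker n k B ∈ Grass n k := by
  have hnorm : 0 < ‖pluecker n k B‖ := norm_pos_iff.mpr hB
  have hdet : (Bᵀ * B).det = ‖pluecker n k B‖ ^ 2 := (norm_pluecker_sq B).symm
  have hdetpos : 0 < (Bᵀ * B).det := by rw [hdet]; positivity
  have hpd := posdef_of_det_ne_zero B hdetpos.ne'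
  set S := CFC.sqrt (Bᵀ * B) with hS
  have hSS : S * S = Bᵀ * B := CFC.sqrt_mul_sqrt_self _ hpd.posSemidef.nonneg
  have hdS2 : S.det * S.det = (Bᵀ * B).det := by rw [← Matrix.det_mul, hSS]
  have hSsemi : S.PosSemidef := (sub_zero S) ▸ (CFC.sqrt_nonneg (Bᵀ * B) : (S - 0).PosSemidef)
  have hdSnn : 0 ≤ S.det := by
    rw [hSsemi.1.det_eq_prod_eigenvalues]
    apply Finset.prod_nonneg
    intro i _
    simpa using hSsemi.eigenvalues_nonneg i
  have hdS : 0 < S.det := by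
    rcases hdSnn.lt_or_eq with h | h
    · exact h
    · exfalso; rw [← h, mul_zero] at hdS2; exact hdetpos.ne' hdS2.symm
  have hSt : Sᵀ = S := by rw [← conjT_eq_transpose]; exact hSsemi.1
  have hSunit : IsUnit S.det := hdS.ne'.isUnit
  set Q := B * S⁻¹ with hQ
  have hQS : Q * S = B := by
    rw [hQ, Matrix.mul_assoc, Matrix.nonsing_inv_mul S hSunit, Matrix.mul_one]
  have hQorth : Qᵀ * Q = 1 := by
    rw [hQ, Matrix.transpose_mul, Matrix.transpose_nonsing_inv, hSt]
    rw [Matrix.mul_assoc, ← Matrix.mul_assoc Bᵀ B S⁻¹, ← hSS,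
      Matrix.mul_assoc S S S⁻¹, Matrix.mul_nonsing_inv S hSunit, Matrix.mul_one,
      Matrix.nonsing_inv_mul S hSunit]
  have hplB : pluecker n k B = S.det • pluecker n k Q := by rw [← hQS, pluecker_mul]
  have hnormB : ‖pluecker n k B‖ = S.det := by
    rw [hplB, norm_smul, norm_pluecker_of_orth hQorth, mul_one, Real.norm_eq_abs,
      abs_of_pos hdS]
  refine ⟨Q, hQorth, ?_⟩
  rw [hplB, norm_smul, Real.norm_eq_abs, abs_of_pos hdS, norm_pluecker_of_orth hQorth,
    mul_one, smul_smul, inv_mul_cancel₀ hdS.ne', one_smul]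

theorem continuous_pluecker {n k : ℕ} : Continuous (pluecker n k) := by
  have h : Continuous fun (A : Matrix (Fin n) (Fin k) ℝ) =>
      (fun lam : Lam n k => (A.submatrix (lam.1.orderEmbOfFin lam.2) id).det) :=
    continuous_pi fun lam => (continuous_id.matrix_submatrix _ _).matrix_det
  exact (EuclideanSpace.equiv (Lam n k) ℝ).symm.continuous.comp h

theorem dense_rat_matrices {n k : ℕ} :
    Dense {B : Matrix (Fin n) (Fin k) ℝ | ∀ i j, ∃ q : ℚ, B i j = (q : ℝ)} := by
  have h1 : Dense {f : Fin k → ℝ | ∀ j, ∃ q : ℚ, f j = (q : ℝ)} := by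
    have h := dense_pi (α := fun _ : Fin k => ℝ)
      (s := fun _ => Set.range ((↑) : ℚ → ℝ)) Set.univ (fun _ _ => Rat.denseRange_cast)
    convert h using 1
    ext f
    simp [Set.mem_pi, eq_comm]
  have h := dense_pi (α := fun _ : Fin n => Fin k → ℝ)
    (s := fun _ => {f : Fin k → ℝ | ∀ j, ∃ q : ℚ, f j = (q : ℝ)}) Set.univ (fun _ _ => h1)
  show Dense {B : Fin n → Fin k → ℝ | ∀ i j, ∃ q : ℚ, B i j = (q : ℝ)}
  convert h using 1
  ext B
  constructor
  · intro hB i _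
    exact hB i
  · intro hB i j
    exact hB i (Set.mem_univ i) j

theorem exists_rational_slope_near {n k : ℕ} {x : EuclideanSpace ℝ (Lam n k)}
    (hx : x ∈ Grass n k) {δ : ℝ} (hδ : 0 < δ) :
    ∃ y, HasRationalSlope n k y ∧ y ∈ Grass n k ∧ ‖y - x‖ < δ := by
  obtain ⟨A, hA, rfl⟩ := hx
  have hxnorm : ‖pluecker n k A‖ = 1 := norm_pluecker_of_orth hA
  have hxne : pluecker n k A ≠ 0 := by
    intro h; rw [h, norm_zero] at hxnorm; norm_num at hxnorm
  set g : Matrix (Fin n) (Fin k) ℝ → EuclideanSpace ℝ (Lam n k) :=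
    fun B => ‖pluecker n k B‖⁻¹ • pluecker n k B with hg
  have hgc : ContinuousAt g A := by
    apply ContinuousAt.fun_smul
    · exact (continuous_pluecker.norm.continuousAt).inv₀ (by rw [hxnorm]; norm_num)
    · exact continuous_pluecker.continuousAt
  have hgA : g A = pluecker n k A := by rw [hg]; simp [hxnorm]
  have hU1 : {B | pluecker n k B ≠ 0} ∈ nhds A := by
    have hop : IsOpen {B | pluecker n k B ≠ 0} :=
      isOpen_compl_singleton.preimage continuous_pluecker
    exact hop.mem_nhds hxne
  have hU2 : g ⁻¹' Metric.ball (pluecker n k A) δ ∈ nhds A :=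
    hgc.preimage_mem_nhds (hgA ▸ Metric.ball_mem_nhds _ hδ)
  obtain ⟨B, hBmem, hBrat⟩ := mem_closure_iff_nhds.mp (dense_rat_matrices A) _
    (Filter.inter_mem hU1 hU2)
  obtain ⟨hBne, hBball⟩ := hBmem
  refine ⟨g B, ⟨B, hBrat, hBne, rfl⟩, normalized_mem_grass hBne, ?_⟩
  have hd := Metric.mem_ball.mp hBball
  rwa [dist_eq_norm] at hd
/-- a positive combination of Grassmannian points can be
approximated by one made of rational-slope points, with a small defect. -/
theorem approx_combination_by_rational_slope (n k : ℕ) (hk : 1 ≤ k) (hkn : k ≤ n)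
    (d : ℕ) (hd : 1 ≤ d)
    (η₀ : EuclideanSpace ℝ (Lam n k)) (η : Fin d → EuclideanSpace ℝ (Lam n k))
    (hη₀ : η₀ ∈ Grass n k) (hη : ∀ i, η i ∈ Grass n k)
    (m : Fin d → ℝ) (hm : ∀ i, 0 < m i)
    (hsum : η₀ = ∑ i, m i • η i)
    (ε : ℝ) (hε : 0 < ε) :
    ∃ (ηt₀ : EuclideanSpace ℝ (Lam n k)) (ηt : Fin d → EuclideanSpace ℝ (Lam n k)),
      HasRationalSlope n k ηt₀ ∧ (∀ i, HasRationalSlope n k (ηt i)) ∧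
      ηt₀ ∈ Grass n k ∧ (∀ i, ηt i ∈ Grass n k) ∧
      (∀ i, ‖ηt i - η i‖ < ε / (2 * d * m i)) ∧
      ‖ηt₀ - η₀‖ < ε / 2 ∧
      ‖ηt₀ - ∑ i, m i • ηt i‖ < ε := by
  have hd0 : 0 < (d : ℝ) := by exact_mod_cast Nat.lt_of_lt_of_le Nat.zero_lt_one hd
  obtain ⟨ηt₀, hrs₀, hg₀, hc₀⟩ := exists_rational_slope_near hη₀ (by linarith : (0:ℝ) < ε / 2)
  choose ηt hrs hgr hcl using fun i =>
    exists_rational_slope_near (hη i)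
      (div_pos hε (mul_pos (mul_pos two_pos hd0) (hm i)))
  refine ⟨ηt₀, ηt, hrs₀, hrs, hg₀, hgr, hcl, hc₀, ?_⟩
  have key : ηt₀ - ∑ i, m i • ηt i = (ηt₀ - η₀) + ∑ i, m i • (η i - ηt i) := by
    rw [hsum]
    simp only [smul_sub]
    rw [Finset.sum_sub_distrib]
    abel
  rw [key]
  have hb1 : ‖∑ i, m i • (η i - ηt i)‖ ≤ ∑ i, m i * ‖η i - ηt i‖ := by
    refine (norm_sum_le _ _).trans ?_
    refine Finset.sum_le_sum fun i _ => ?_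
    rw [norm_smul, Real.norm_eq_abs, abs_of_pos (hm i)]
  have hb2 : ∑ i, m i * ‖η i - ηt i‖ ≤ ∑ _i : Fin d, ε / (2 * d) := by
    refine Finset.sum_le_sum fun i _ => ?_
    have h2 : m i * ‖η i - ηt i‖ ≤ m i * (ε / (2 * d * m i)) :=
      mul_le_mul_of_nonneg_left (by rw [norm_sub_rev]; exact (hcl i).le) (hm i).le
    have hmne := (hm i).ne'
    have hdne := hd0.ne'
    have h3 : m i * (ε / (2 * d * m i)) = ε / (2 * d) := by
      field_simp
    linarith
  have hb3 : (∑ _i : Fin d, ε / (2 * d)) = ε / 2 := by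
    have hdne := hd0.ne'
    rw [Finset.sum_const, Finset.card_univ, Fintype.card_fin, nsmul_eq_mul]
    field_simp
  calc ‖(ηt₀ - η₀) + ∑ i, m i • (η i - ηt i)‖
      ≤ ‖ηt₀ - η₀‖ + ‖∑ i, m i • (η i - ηt i)‖ := norm_add_le _ _
    _ < ε := by
        have := hb1.trans (hb2.trans_eq hb3)
        linarith
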